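/- Let p be an odd prime and F: V → F_{p^m} a vectorial dual-bent function satisfying Condition I with sign ε. Let ψ be a multiplicative character of F_{p^m} of order greater than 2 (extended by ψ(0) = 0), χ_1 the canonical additive character of V, and a ∈ V \ {0}. Then the hybrid sum Ŝ_1 := Σ_{x ∈ V} ψ(F(x)) χ_1(ax) has absolute value 0 if F^*(a) = 0 and absolute value p^{n/2} if F^*(a) ≠ 0. -/

import Mathlib

open Complex Finset

/-- `ζ_p^k` for `k ∈ Z/p`. -/
noncomputable def zetaP (p : ℕ) (k : ZMod p) : ℂ :=
  Complex.exp (2 * Real.pi * Complex.I * (k.val : ℂ) / p)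

/-- The additive character of `ZMod p` underlying `zetaP`. -/
noncomputable def zchar (p : ℕ) [NeZero p] : AddChar (ZMod p) ℂ :=
  AddChar.zmodChar p ((Complex.isPrimitiveRoot_exp p (NeZero.ne p)).pow_eq_one)

lemma zchar_apply (p : ℕ) [NeZero p] (k : ZMod p) : zchar p k = zetaP p k := by
  rw [zchar, AddChar.zmodChar_apply, zetaP, ← Complex.exp_nat_mul]
  congr 1
  ring

lemma zetaP_add (p : ℕ) [NeZero p] (j k : ZMod p) :
    zetaP p (j + k) = zetaP p j * zetaP p k := by
  rw [← zchar_apply, ← zchar_apply, ← zchar_apply, AddChar.map_add_eq_mul]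

lemma zetaP_zero (p : ℕ) [NeZero p] : zetaP p 0 = 1 := by
  rw [← zchar_apply]; exact AddChar.map_zero_eq_one _

/-- Sum over a field equals sum over its units when the summand vanishes at `0`. -/
lemma sum_units_eq' {K : Type*} [Field K] [Fintype K] [DecidableEq K] (f : K → ℂ)
    (hf : f 0 = 0) : ∑ c : K, f c = ∑ u : Kˣ, f ↑u := by
  classical
  rw [← Finset.sum_erase (Finset.univ : Finset K) hf]
  refine (Finset.sum_nbij' (i := fun (u : Kˣ) => (u : K))
    (j := fun c => if h : c = 0 then 1 else Units.mk0 c h) ?_ ?_ ?_ ?_ ?_).symm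
  · intro u _; simp [Units.ne_zero u]
  · intro c hc; simp
  · intro u _
    simp [Units.ne_zero u]
  · intro c hc
    rw [Finset.mem_erase] at hc
    simp [hc.1]
  · intro u _; rfl

/-- The multiplicative identity relating a character to a Gauss sum. -/
lemma key_identity {K : Type*} [Field K] [Fintype K] (ψ : MulChar K ℂ) (hψ1 : ψ ≠ 1)
    (χ : AddChar K ℂ) (y : K) :
    ψ y * gaussSum ψ⁻¹ χ = ∑ c : K, ψ⁻¹ c * χ (c * y) := by
  have h1 : gaussSum ψ⁻¹ (AddChar.mulShift χ y) = ∑ c : K, ψ⁻¹ c * χ (c * y) := by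
    unfold gaussSum
    refine Finset.sum_congr rfl fun c _ => ?_
    rw [AddChar.mulShift_apply, mul_comm y c]
  rcases eq_or_ne y 0 with rfl | hy
  · rw [MulChar.map_zero, zero_mul]
    symm
    have h2 : ∀ c : K, ψ⁻¹ c * χ (c * 0) = ψ⁻¹ c := by
      intro c; rw [mul_zero, AddChar.map_zero_eq_one, mul_one]
    simp_rw [h2]
    exact MulChar.sum_eq_zero_of_ne_one (fun h => hψ1 (inv_eq_one.mp h))
  · have hgs := gaussSum_mulShift ψ⁻¹ χ (Units.mk0 y hy)
    rw [Units.val_mk0] at hgs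
    have hone : ψ⁻¹ y * ψ y = 1 := by
      have h3 : (ψ⁻¹ * ψ) y = 1 := by
        rw [MulChar.inv_mul]; exact MulChar.one_apply (IsUnit.mk0 y hy)
      rwa [MulChar.coeToFun_mul, Pi.mul_apply] at h3
    calc ψ y * gaussSum ψ⁻¹ χ
        = ψ y * (ψ⁻¹ y * gaussSum ψ⁻¹ (AddChar.mulShift χ y)) := by rw [hgs]
      _ = (ψ⁻¹ y * ψ y) * gaussSum ψ⁻¹ (AddChar.mulShift χ y) := by ring
      _ = ∑ c : K, ψ⁻¹ c * χ (c * y) := by rw [hone, one_mul, h1]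

/-- The absolute value squared of a Gauss sum over a finite field. -/
lemma gauss_abs_sq {K : Type*} [Field K] [Fintype K] (hRpos : 0 < ringChar K)
    {χ : AddChar K ℂ} (hχprim : χ.IsPrimitive) {χm : MulChar K ℂ} (hχm : χm ≠ 1) :
    ‖gaussSum χm χ‖ ^ 2 = (Fintype.card K : ℝ) := by
  have hconj : (starRingEnd ℂ) (gaussSum χm χ) = gaussSum χm⁻¹ χ⁻¹ := by
    unfold gaussSum
    rw [map_sum]
    refine Finset.sum_congr rfl fun c _ => ?_
    rw [map_mul]
    congr 1
    · rw [starRingEnd_apply]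
      exact MulChar.star_apply' χm c
    · exact AddChar.starComp_apply hRpos c
  have hmul := gaussSum_mul_gaussSum_eq_card hχm hχprim
  rw [← hconj, Complex.mul_conj] at hmul
  have h3 : Complex.normSq (gaussSum χm χ) = (Fintype.card K : ℝ) := by
    exact_mod_cast hmul
  rw [Complex.sq_norm, h3]

/-- Under Condition I with sign `ε`, for a multiplicative character `ψ` of
`F_{p^m}` of order greater than 2 (i.e. `ψ ≠ 1` and `ψ² ≠ 1`) and `a ≠ 0`,
the hybrid sum `Ŝ_1 = Σ_{x ∈ V} ψ(F(x)) χ_1(ax)` has absolute value `0` if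
`F^*(a) = 0` and `p^{n/2}` if `F^*(a) ≠ 0`. -/
theorem hybrid_sum_S1hat_abs
    (p n m d : ℕ) [Fact p.Prime] (hp : p ≠ 2)
    (hm : 1 ≤ m) (hn : Even n) (hmn : 2 * m ≤ n)
    (V : Type*) [AddCommGroup V] [Module (ZMod p) V] [Fintype V]
    (hV : Fintype.card V = p ^ n)
    (K : Type*) [Field K] [Fintype K] [DecidableEq K] [Algebra (ZMod p) K]
    (hK : Fintype.card K = p ^ m)
    (B : V →ₗ[ZMod p] V →ₗ[ZMod p] ZMod p)
    (hBsym : ∀ v w, B v w = B w v)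
    (hBnd : ∀ v, (∀ w, B v w = 0) → v = 0)
    (F Fstar : V → K)
    (ε : ℤ) (hε : ε = 1 ∨ ε = -1)
    (hd : 2 ≤ d) (hdeven : Even d)
    (hgcd : Nat.gcd (d - 1) (p ^ m - 1) = 1)
    (hF0 : F 0 = 0) (hFstar0 : Fstar 0 = 0)
    (hFstarneg : ∀ a : V, Fstar (-a) = Fstar a)
    (hWalsh : ∀ c : K, c ≠ 0 → ∀ a : V,
      ∑ x : V, zetaP p (Algebra.trace (ZMod p) K (c * F x) - B a x)
        = (ε : ℂ) * (p : ℂ) ^ (n / 2)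
            * zetaP p (Algebra.trace (ZMod p) K (c ^ ((1 : ℤ) - d) * Fstar a)))
    (ψ : MulChar K ℂ) (hψ1 : ψ ≠ 1) (hψ2 : ψ * ψ ≠ 1)
    (a : V) (ha : a ≠ 0) :
    (Fstar a = 0 →
      ‖∑ x : V, ψ (F x) * zetaP p (B a x)‖ = 0)
    ∧ (Fstar a ≠ 0 →
      ‖∑ x : V, ψ (F x) * zetaP p (B a x)‖ = (p : ℝ) ^ (n / 2)) := by
  haveI : NeZero p := ⟨(Fact.out : p.Prime).ne_zero⟩
  haveI : CharP K p := charP_of_injective_algebraMap (algebraMap (ZMod p) K).injective p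
  have hrc : ringChar K = p := ringChar.eq K p
  have hRpos : 0 < ringChar K := by rw [hrc]; exact (Fact.out : p.Prime).pos
  -- the additive character of `K`
  set χ : AddChar K ℂ :=
    (zchar p).compAddMonoidHom (Algebra.trace (ZMod p) K).toAddMonoidHom with hχdef
  have hχapp : ∀ y : K, χ y = zetaP p (Algebra.trace (ZMod p) K y) := by
    intro y
    rw [hχdef, AddChar.compAddMonoidHom_apply, zchar_apply]
    rfl
  have hχne : χ ≠ 1 := by
    obtain ⟨y, hy⟩ := Algebra.trace_surjective (ZMod p) K (1 : ZMod p)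
    rw [AddChar.ne_one_iff]
    refine ⟨y, ?_⟩
    rw [hχdef, AddChar.compAddMonoidHom_apply]
    show zchar p (Algebra.trace (ZMod p) K y) ≠ 1
    haveI : Fact (1 < p) := ⟨(Fact.out : p.Prime).one_lt⟩
    rw [hy, zchar, AddChar.zmodChar_apply, ZMod.val_one, pow_one]
    exact (Complex.isPrimitiveRoot_exp p (NeZero.ne p)).ne_one
      (Fact.out : p.Prime).one_lt
  have hχprim : χ.IsPrimitive := AddChar.IsPrimitive.of_ne_one hχne
  have hψinv : ψ⁻¹ ≠ 1 := fun h => hψ1 (inv_eq_one.mp h)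
  -- the main identity
  have main : gaussSum ψ⁻¹ χ * (∑ x : V, ψ (F x) * zetaP p (B a x))
      = (ε : ℂ) * (p : ℂ) ^ (n / 2)
          * ∑ c : K, ψ⁻¹ c
              * zetaP p (Algebra.trace (ZMod p) K (c ^ ((1 : ℤ) - d) * Fstar a)) := by
    have h1 : gaussSum ψ⁻¹ χ * (∑ x : V, ψ (F x) * zetaP p (B a x))
        = ∑ x : V, (ψ (F x) * gaussSum ψ⁻¹ χ) * zetaP p (B a x) := by
      rw [Finset.mul_sum]
      exact Finset.sum_congr rfl fun x _ => by ring
    rw [h1]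
    simp_rw [key_identity ψ hψ1 χ]
    have h2 : ∀ x : V, (∑ c : K, ψ⁻¹ c * χ (c * F x)) * zetaP p (B a x)
        = ∑ c : K, ψ⁻¹ c
            * zetaP p (Algebra.trace (ZMod p) K (c * F x) + B a x) := by
      intro x
      rw [Finset.sum_mul]
      refine Finset.sum_congr rfl fun c _ => ?_
      rw [mul_assoc, hχapp, ← zetaP_add]
    simp_rw [h2]
    rw [Finset.sum_comm]
    have h3 : ∀ c : K,
        ∑ x : V, ψ⁻¹ c * zetaP p (Algebra.trace (ZMod p) K (c * F x) + B a x)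
        = ψ⁻¹ c * ((ε : ℂ) * (p : ℂ) ^ (n / 2)
            * zetaP p (Algebra.trace (ZMod p) K (c ^ ((1 : ℤ) - d) * Fstar a))) := by
      intro c
      rw [← Finset.mul_sum]
      rcases eq_or_ne c 0 with rfl | hc
      · rw [MulChar.map_zero, zero_mul, zero_mul]
      · congr 1
        have hB : ∀ x : V, Algebra.trace (ZMod p) K (c * F x) + B a x
            = Algebra.trace (ZMod p) K (c * F x) - B (-a) x := by
          intro x
          rw [map_neg, LinearMap.neg_apply, sub_neg_eq_add]
        simp_rw [hB]
        rw [hWalsh c hc (-a), hFstarneg]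
    simp_rw [h3]
    rw [Finset.mul_sum]
    exact Finset.sum_congr rfl fun c _ => by ring
  have habsG := gauss_abs_sq hRpos hχprim hψinv
  have hGne : ‖gaussSum ψ⁻¹ χ‖ ≠ 0 := by
    intro h
    rw [h, hK] at habsG
    have hpm0 : (0 : ℝ) < ((p ^ m : ℕ) : ℝ) := by
      exact_mod_cast pow_pos (Fact.out : p.Prime).pos m
    rw [zero_pow two_ne_zero] at habsG
    linarith
  constructor
  · -- case `Fstar a = 0`
    intro h0
    have hT0 : (∑ c : K, ψ⁻¹ c
        * zetaP p (Algebra.trace (ZMod p) K (c ^ ((1 : ℤ) - d) * Fstar a))) = 0 := by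
      have h4 : ∀ c : K, ψ⁻¹ c
          * zetaP p (Algebra.trace (ZMod p) K (c ^ ((1 : ℤ) - d) * Fstar a))
          = ψ⁻¹ c := by
        intro c
        rw [h0, mul_zero, map_zero, zetaP_zero, mul_one]
      simp_rw [h4]
      exact MulChar.sum_eq_zero_of_ne_one hψinv
    rw [hT0, mul_zero] at main
    have hS0 : (∑ x : V, ψ (F x) * zetaP p (B a x)) = 0 := by
      rcases mul_eq_zero.mp main with h | h
      · exact absurd (by rw [h, norm_zero]) hGne
      · exact h
    rw [hS0, norm_zero]
  · -- case `Fstar a ≠ 0`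
    intro hb
    -- setup of the auxiliary character μ
    have hp3 : 3 ≤ p := by
      have := (Fact.out : p.Prime).two_le
      omega
    have hpm : 3 ≤ p ^ m := le_trans hp3 (Nat.le_self_pow (by omega) p)
    set N : ℕ := p ^ m - 1 with hN
    have hN2 : 2 ≤ N := by omega
    haveI : NeZero N := ⟨by omega⟩
    haveI : Fact (1 < N) := ⟨by omega⟩
    set w : (ZMod N)ˣ := ZMod.unitOfCoprime (d - 1) hgcd with hw
    set e : ℕ := (-(↑(w⁻¹) : ZMod N)).val with he
    have hcast : ((e : ℕ) : ZMod N) = -(↑(w⁻¹) : ZMod N) := ZMod.natCast_rightInverse _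
    have hZeq : (((1 : ℤ) - d) * e : ZMod N) = 1 := by
      push_cast
      rw [hcast]
      have hwc : ((w : ZMod N)) = ((d - 1 : ℕ) : ZMod N) := ZMod.coe_unitOfCoprime _ _
      have hd' : ((d : ZMod N) - 1) = (w : ZMod N) := by
        rw [hwc, Nat.cast_sub (by omega : 1 ≤ d), Nat.cast_one]
      calc (1 - (d : ZMod N)) * (-(↑(w⁻¹) : ZMod N))
          = ((d : ZMod N) - 1) * ↑(w⁻¹) := by ring
        _ = ↑w * ↑(w⁻¹) := by rw [hd']
        _ = 1 := w.mul_inv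
    obtain ⟨t, ht⟩ : ∃ t : ℤ, ((1 : ℤ) - d) * e = 1 + N * t := by
      have hmod : (((1 : ℤ) - d) * e) ≡ 1 [ZMOD (N : ℕ)] :=
        (ZMod.intCast_eq_intCast_iff (((1 : ℤ) - d) * e) 1 N).mp (by exact_mod_cast hZeq)
      obtain ⟨t0, ht0⟩ := hmod.dvd
      refine ⟨-t0, by rw [mul_neg]; linarith⟩
    have hcN : ∀ c : K, c ≠ 0 → c ^ (N : ℕ) = 1 := by
      intro c hc
      have := FiniteField.pow_card_sub_one_eq_one c hc
      rwa [hK] at this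
    have he0 : e ≠ 0 := by
      intro h0
      have h1 : (-(↑(w⁻¹) : ZMod N)) = 0 := by rw [← hcast, h0, Nat.cast_zero]
      have h2 : (↑(w⁻¹) : ZMod N) = 0 := by rwa [neg_eq_zero] at h1
      have h3 := w.mul_inv
      rw [h2, mul_zero] at h3
      exact zero_ne_one h3
    set μ : MulChar K ℂ := ψ⁻¹ ^ e with hμ
    have hμkey : ∀ c : K, c ≠ 0 → μ (c ^ ((1 : ℤ) - d)) = ψ⁻¹ c := by
      intro c hc
      rw [hμ, MulChar.pow_apply' _ he0, ← map_pow, ← zpow_natCast (c ^ ((1 : ℤ) - d)) e,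
        ← zpow_mul, ht, zpow_add₀ hc, zpow_one, zpow_mul, zpow_natCast, hcN c hc, one_zpow,
        mul_one]
    have hμne : μ ≠ 1 := by
      intro h
      apply hψ1
      rw [← inv_eq_one]
      refine MulChar.ext fun u => ?_
      have h1 := hμkey (u : K) u.ne_zero
      rw [h] at h1
      rw [← h1, MulChar.one_apply (IsUnit.mk0 _ (zpow_ne_zero _ u.ne_zero)),
        MulChar.one_apply_coe]
    have hcardU : Fintype.card Kˣ = N := by rw [Fintype.card_units, hK]
    have hupow : ∀ u : Kˣ, u ^ (((1 : ℤ) - d) * e) = u := by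
      intro u
      have h1 : u ^ ((N : ℕ) : ℤ) = 1 := by
        rw [zpow_natCast, ← hcardU, pow_card_eq_one]
      rw [ht, zpow_add, zpow_one, zpow_mul, h1, one_zpow, mul_one]
    have hinj : Function.Injective (fun u : Kˣ => u ^ ((1 : ℤ) - d)) := by
      intro x y hxy
      simp only at hxy
      have h2 : x ^ (((1 : ℤ) - d) * e) = y ^ (((1 : ℤ) - d) * e) := by
        rw [zpow_mul, zpow_mul, hxy]
      rwa [hupow, hupow] at h2
    let σ : Kˣ ≃ Kˣ := Equiv.ofBijective _ (Finite.injective_iff_bijective.mp hinj)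
    have hσ : ∀ u : Kˣ, σ u = u ^ ((1 : ℤ) - d) := fun u => rfl
    -- express T via a Gauss sum of μ
    have hTχ : (∑ c : K, ψ⁻¹ c
        * zetaP p (Algebra.trace (ZMod p) K (c ^ ((1 : ℤ) - d) * Fstar a)))
        = ∑ c : K, ψ⁻¹ c * χ (c ^ ((1 : ℤ) - d) * Fstar a) := by
      refine Finset.sum_congr rfl fun c _ => ?_
      rw [hχapp]
    have hT : μ (Fstar a) * (∑ c : K, ψ⁻¹ c * χ (c ^ ((1 : ℤ) - d) * Fstar a))
        = gaussSum μ χ := by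
      have hstep1 : ∑ c : K, ψ⁻¹ c * χ (c ^ ((1 : ℤ) - d) * Fstar a)
          = ∑ u : Kˣ, ψ⁻¹ ↑u * χ ((↑u : K) ^ ((1 : ℤ) - d) * Fstar a) :=
        sum_units_eq' (fun c => ψ⁻¹ c * χ (c ^ ((1 : ℤ) - d) * Fstar a))
          (by simp [MulChar.map_zero])
      have hstep2 : ∑ u : Kˣ, ψ⁻¹ ↑u * χ ((↑u : K) ^ ((1 : ℤ) - d) * Fstar a)
          = ∑ u : Kˣ, μ ↑u * χ ((↑u : K) * Fstar a) := by
        refine Fintype.sum_equiv σ _ _ fun u => ?_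
        rw [hσ, Units.val_zpow_eq_zpow_val, hμkey (↑u : K) u.ne_zero]
      have hstep3 : ∑ u : Kˣ, μ ↑u * χ ((↑u : K) * Fstar a)
          = ∑ c : K, μ c * χ (c * Fstar a) :=
        (sum_units_eq' (fun c => μ c * χ (c * Fstar a)) (by simp [MulChar.map_zero])).symm
      have hstep4 : ∑ c : K, μ c * χ (c * Fstar a)
          = gaussSum μ (AddChar.mulShift χ (Fstar a)) := by
        unfold gaussSum
        refine Finset.sum_congr rfl fun c _ => ?_
        rw [AddChar.mulShift_apply, mul_comm (Fstar a) c]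
      have hgs := gaussSum_mulShift μ χ (Units.mk0 (Fstar a) hb)
      rw [Units.val_mk0] at hgs
      rw [hstep1, hstep2, hstep3, hstep4, hgs]
    have hμb1 : ‖μ (Fstar a)‖ = 1 := by
      have hpow : (μ (Fstar a)) ^ (N : ℕ) = 1 := by
        rw [← map_pow, hcN (Fstar a) hb, map_one]
      have h5 := Complex.norm_eq_one_of_pow_eq_one hpow (by omega)
      exact h5
    -- final assembly
    have habsM := gauss_abs_sq hRpos hχprim hμne
    have hGM : ‖gaussSum μ χ‖ = ‖gaussSum ψ⁻¹ χ‖ := by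
      have h7 : ‖gaussSum μ χ‖ ^ 2 = ‖gaussSum ψ⁻¹ χ‖ ^ 2 := by
        rw [habsM, habsG]
      calc ‖gaussSum μ χ‖
          = Real.sqrt (‖gaussSum μ χ‖ ^ 2) :=
            (Real.sqrt_sq (norm_nonneg _)).symm
        _ = Real.sqrt (‖gaussSum ψ⁻¹ χ‖ ^ 2) := by rw [h7]
        _ = ‖gaussSum ψ⁻¹ χ‖ := Real.sqrt_sq (norm_nonneg _)
    have habsT : ‖∑ c : K, ψ⁻¹ c
        * zetaP p (Algebra.trace (ZMod p) K (c ^ ((1 : ℤ) - d) * Fstar a))‖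
        = ‖gaussSum ψ⁻¹ χ‖ := by
      rw [hTχ]
      have h8 := congrArg (‖·‖) hT
      rw [norm_mul, hμb1, one_mul] at h8
      rw [h8, hGM]
    have h6 := congrArg (‖·‖) main
    rw [norm_mul, norm_mul, norm_mul, habsT] at h6
    have hε1 : ‖((ε : ℤ) : ℂ)‖ = 1 := by
      rcases hε with rfl | rfl <;> simp
    have hppow : ‖(p : ℂ) ^ (n / 2)‖ = (p : ℝ) ^ (n / 2) := by
      rw [norm_pow, Complex.norm_natCast]
    rw [hε1, hppow, one_mul] at h6
    have h9 : ‖gaussSum ψ⁻¹ χ‖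
        * ‖∑ x : V, ψ (F x) * zetaP p (B a x)‖
        = ‖gaussSum ψ⁻¹ χ‖ * ((p : ℝ) ^ (n / 2)) := by
      rw [h6]; ring
    exact mul_left_cancel₀ hGne h9
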